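/- Let X, Y be compact Hausdorff spaces and E, F Banach spaces over 𝕂 ∈ {ℝ, ℂ} such that S(F) contains a point v for which {v} is a maximal convex subset of S(F). Let A be a closed 𝕂-linear subspace of C(X,E) with Θ(A) = X and B a 𝕂-linear subspace of C(Y,F) with Θ(B) = Y. Then for any surjective (not necessarily linear) isometry T : A → B there exist a continuous map Φ : Y → X and a family {V_y}_{y∈Y} of real-linear operators from E to F with ‖V_y‖ ≤ 1 for all y ∈ Y, such that Tf(y) = T0(y) + V_y(f(Φ(y))) for all f ∈ A and all y ∈ Y. -/

import Mathlib

open Set Metric Filter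

variable {𝕂 : Type*} [RCLike 𝕂]
variable {X : Type*} [TopologicalSpace X] [CompactSpace X] [T2Space X]
variable {Y : Type*} [TopologicalSpace Y] [CompactSpace Y] [T2Space Y]
variable {E : Type*} [NormedAddCommGroup E] [NormedSpace ℝ E] [NormedSpace 𝕂 E]
  [IsScalarTower ℝ 𝕂 E] [CompleteSpace E]
variable {F : Type*} [NormedAddCommGroup F] [NormedSpace ℝ F] [NormedSpace 𝕂 F]
  [IsScalarTower ℝ 𝕂 F] [CompleteSpace F]

/-- `C` is a maximal convex subset of `S` (convexity over `ℝ`). -/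
def MaxConvexIn {M : Type*} [AddCommGroup M] [Module ℝ M] (S C : Set M) : Prop :=
  C ⊆ S ∧ Convex ℝ C ∧ ∀ C' : Set M, C' ⊆ S → Convex ℝ C' → C ⊆ C' → C' = C

/-- The set `Θ(A)` of strong boundary points of a set `A` of functions in `C(X,E)`. -/
def strongBoundaryPoints {Z M : Type*} [TopologicalSpace Z] [CompactSpace Z]
    [NormedAddCommGroup M] (A : Set C(Z, M)) : Set Z :=
  {x | ∀ U ∈ nhds x, ∀ ε : ℝ, 0 < ε → ∀ u : M, ‖u‖ = 1 →
    ∃ f ∈ A, ‖f‖ = 1 ∧ f x = u ∧ ∀ y, y ∉ U → ‖f y‖ < ε}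

omit [T2Space X] [NormedSpace ℝ E] in
theorem normAttain [Nonempty X] (f : C(X,E)) : ∃ z, ‖f z‖ = ‖f‖ := by
  obtain ⟨z, -, hz⟩ := isCompact_univ.exists_isMaxOn univ_nonempty
    (f.continuous.norm.continuousOn)
  refine ⟨z, le_antisymm (f.norm_coe_le_norm z) ?_⟩
  exact (ContinuousMap.norm_le f (norm_nonneg _)).mpr fun x => hz (mem_univ x)

omit [T2Space X] in
theorem rsmul_mem (A : Subspace 𝕂 C(X,E)) {f : C(X,E)} (hf : f ∈ A) (r : ℝ) : r • f ∈ A := by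
  have : r • f = (r • (1:𝕂)) • f := by rw [smul_assoc, one_smul]
  rw [this]; exact A.smul_mem _ hf

set_option maxHeartbeats 1600000 in
theorem mainStep (v : F) (hv : MaxConvexIn (sphere (0 : F) 1) {v})
    (A : Subspace 𝕂 C(X, E))
    (hΘA : strongBoundaryPoints (A : Set C(X, E)) = Set.univ)
    (B : Subspace 𝕂 C(Y, F))
    (hΘB : strongBoundaryPoints (B : Set C(Y, F)) = Set.univ)
    (S : C(X, E) → C(Y, F))
    (hSmem : ∀ f ∈ A, S f ∈ B)
    (hSsurj : ∀ g ∈ B, ∃ f ∈ A, S f = g)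
    (hSnorm : ∀ f ∈ A, ‖S f‖ = ‖f‖)
    (hSadd : ∀ f ∈ A, ∀ g ∈ A, S (f + g) = S f + S g)
    (hSsmul : ∀ (r : ℝ), ∀ f ∈ A, S (r • f) = r • S f)
    (y : Y) :
    ∃ x : X, (∀ f ∈ A, ‖S f y‖ ≤ ‖f x‖) ∧
      (∀ U ∈ nhds x, ∀ ε : ℝ, 0 < ε →
        ∃ h ∈ A, ‖h‖ = 1 ∧ (∀ z, z ∉ U → ‖h z‖ < ε) ∧ S h y = v) := by
  classical
  haveI : Nonempty Y := ⟨y⟩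
  have hv1 : ‖v‖ = 1 := by
    have := hv.1 (mem_singleton v)
    rwa [mem_sphere_zero_iff_norm] at this
  have hΘA' : ∀ x : X, ∀ U ∈ nhds x, ∀ ε : ℝ, 0 < ε → ∀ u : E, ‖u‖ = 1 →
      ∃ f ∈ A, ‖f‖ = 1 ∧ f x = u ∧ ∀ z, z ∉ U → ‖f z‖ < ε :=
    fun x => Set.eq_univ_iff_forall.mp hΘA x
  have hΘB' : ∀ y' : Y, ∀ U ∈ nhds y', ∀ ε : ℝ, 0 < ε → ∀ u : F, ‖u‖ = 1 →
      ∃ g ∈ B, ‖g‖ = 1 ∧ g y' = u ∧ ∀ z, z ∉ U → ‖g z‖ < ε :=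
    fun y' => Set.eq_univ_iff_forall.mp hΘB y'
  -- the face N of the unit sphere of A
  set N : Set C(X,E) := {f | f ∈ A ∧ ‖f‖ = 1 ∧ S f y = v} with hN
  -- N is nonempty
  obtain ⟨g₀, hg₀B, hg₀1, hg₀y, -⟩ := hΘB' y univ univ_mem 1 one_pos v hv1
  obtain ⟨f₀, hf₀A, hf₀S⟩ := hSsurj g₀ hg₀B
  have hf₀N : f₀ ∈ N := by
    refine ⟨hf₀A, ?_, by rw [hf₀S]; exact hg₀y⟩
    rw [← hSnorm f₀ hf₀A, hf₀S]; exact hg₀1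
  -- N is closed under convex combinations
  have hNconv : ∀ f ∈ N, ∀ g ∈ N, ∀ a b : ℝ, 0 ≤ a → 0 ≤ b → a + b = 1 →
      a • f + b • g ∈ N := by
    rintro f ⟨hfA, hf1, hfy⟩ g ⟨hgA, hg1, hgy⟩ a b ha hb hab
    have hmem : a • f + b • g ∈ A := A.add_mem (rsmul_mem A hfA a) (rsmul_mem A hgA b)
    have hS : S (a • f + b • g) = a • S f + b • S g := by
      rw [hSadd _ (rsmul_mem A hfA a) _ (rsmul_mem A hgA b), hSsmul a f hfA, hSsmul b g hgA]
    have hSy : S (a • f + b • g) y = v := by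
      rw [hS]
      show a • S f y + b • S g y = v
      rw [hfy, hgy, ← add_smul, hab, one_smul]
    refine ⟨hmem, le_antisymm ?_ ?_, hSy⟩
    · calc ‖a • f + b • g‖ ≤ ‖a • f‖ + ‖b • g‖ := norm_add_le _ _
        _ = a * ‖f‖ + b * ‖g‖ := by
            rw [norm_smul, norm_smul, Real.norm_of_nonneg ha, Real.norm_of_nonneg hb]
        _ = 1 := by rw [hf1, hg1]; ring_nf; linarith
    · calc (1:ℝ) = ‖v‖ := hv1.symm
        _ = ‖S (a • f + b • g) y‖ := by rw [hSy]
        _ ≤ ‖S (a • f + b • g)‖ := ContinuousMap.norm_coe_le_norm _ _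
        _ = ‖a • f + b • g‖ := hSnorm _ hmem
  -- X is nonempty
  haveI hXne : Nonempty X := by
    by_contra h
    rw [not_nonempty_iff] at h
    have : ‖f₀‖ ≤ 0 := (ContinuousMap.norm_le f₀ le_rfl).mpr fun x => (IsEmpty.false x).elim
    rw [hf₀N.2.1] at this; linarith
  -- find a common norming point x₀ for all f ∈ N
  have hx₀ex : ∃ x₀ : X, ∀ f ∈ N, ‖f x₀‖ = 1 := by
    haveI : Nonempty N := ⟨⟨f₀, hf₀N⟩⟩
    set t : N → Set X := fun f => {x | ‖(f : C(X,E)) x‖ = 1} with ht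
    have hdir : Directed (· ⊇ ·) t := by
      rintro f g
      have hm : (1/2 : ℝ) • (f : C(X,E)) + (1/2 : ℝ) • (g : C(X,E)) ∈ N :=
        hNconv f f.2 g g.2 _ _ (by norm_num) (by norm_num) (by norm_num)
      have key : ∀ x ∈ t ⟨_, hm⟩, ‖(f : C(X,E)) x‖ = 1 ∧ ‖(g : C(X,E)) x‖ = 1 := by
        intro x hx
        have hx' : ‖(1/2 : ℝ) • (f : C(X,E)) x + (1/2 : ℝ) • (g : C(X,E)) x‖ = 1 := by
          simpa [ht] using hx
        have h1 : ‖(f : C(X,E)) x‖ ≤ 1 := by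
          rw [← f.2.2.1]; exact ContinuousMap.norm_coe_le_norm _ _
        have h2 : ‖(g : C(X,E)) x‖ ≤ 1 := by
          rw [← g.2.2.1]; exact ContinuousMap.norm_coe_le_norm _ _
        have h3 : (1:ℝ) ≤ 1/2 * ‖(f : C(X,E)) x‖ + 1/2 * ‖(g : C(X,E)) x‖ := by
          calc (1:ℝ) = ‖(1/2 : ℝ) • (f : C(X,E)) x + (1/2 : ℝ) • (g : C(X,E)) x‖ := hx'.symm
            _ ≤ ‖(1/2 : ℝ) • (f : C(X,E)) x‖ + ‖(1/2 : ℝ) • (g : C(X,E)) x‖ := norm_add_le _ _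
            _ = 1/2 * ‖(f : C(X,E)) x‖ + 1/2 * ‖(g : C(X,E)) x‖ := by
                rw [norm_smul, norm_smul]; norm_num
        constructor <;> linarith
      exact ⟨⟨_, hm⟩, fun x hx => (key x hx).1, fun x hx => (key x hx).2⟩
    have hnon : ∀ f : N, (t f).Nonempty := by
      rintro f
      obtain ⟨z, hz⟩ := normAttain (f : C(X,E))
      exact ⟨z, by rw [mem_setOf_eq, hz, f.2.2.1]⟩
    have hcl : ∀ f : N, IsClosed (t f) :=
      fun f => isClosed_eq ((f : C(X,E)).continuous.norm) continuous_const
    obtain ⟨x₀, hx₀⟩ := IsCompact.nonempty_iInter_of_directed_nonempty_isCompact_isClosed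
      t hdir hnon (fun f => (hcl f).isCompact) hcl
    exact ⟨x₀, fun f hf => by simpa [ht] using mem_iInter.mp hx₀ ⟨f, hf⟩⟩
  obtain ⟨x₀, hx₀⟩ := hx₀ex
  -- Zorn: a maximal convex subset D of the unit sphere of E containing the x₀-values of N
  have hZorn : ∃ D : Set E, ((fun f : C(X,E) => f x₀) '' N) ⊆ D ∧
      D ⊆ sphere (0:E) 1 ∧ Convex ℝ D ∧
      ∀ D' : Set E, D' ⊆ sphere (0:E) 1 → Convex ℝ D' → D ⊆ D' → D' = D := by
    set P : Set (Set E) := {D | D ⊆ sphere (0:E) 1 ∧ Convex ℝ D} with hP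
    have hD₀ : ((fun f : C(X,E) => f x₀) '' N) ∈ P := by
      constructor
      · rintro e ⟨f, hf, rfl⟩
        rw [mem_sphere_zero_iff_norm]
        exact hx₀ f hf
      · rintro e₁ ⟨f₁, hf₁, rfl⟩ e₂ ⟨f₂, hf₂, rfl⟩ a b ha hb hab
        exact ⟨a • f₁ + b • f₂, hNconv _ hf₁ _ hf₂ a b ha hb hab, by simp⟩
    have hchains : ∀ c ⊆ P, IsChain (· ⊆ ·) c → c.Nonempty →
        ∃ ub ∈ P, ∀ s ∈ c, s ⊆ ub := by
      intro c hcP hchain hcne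
      refine ⟨⋃₀ c, ⟨?_, ?_⟩, fun s hs => subset_sUnion_of_mem hs⟩
      · exact sUnion_subset fun s hs => (hcP hs).1
      · rintro e₁ ⟨s₁, hs₁, he₁⟩ e₂ ⟨s₂, hs₂, he₂⟩ a b ha hb hab
        rcases hchain.total hs₁ hs₂ with h | h
        · exact ⟨s₂, hs₂, (hcP hs₂).2 (h he₁) he₂ ha hb hab⟩
        · exact ⟨s₁, hs₁, (hcP hs₁).2 he₁ (h he₂) ha hb hab⟩
    obtain ⟨D, hD₀D, hDP, hDmax⟩ := zorn_subset_nonempty P hchains _ hD₀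
    refine ⟨D, hD₀D, hDP.1, hDP.2, fun D' hD'sph hD'conv hDD' => ?_⟩
    exact subset_antisymm (hDmax ⟨hD'sph, hD'conv⟩ hDD') hDD'
  obtain ⟨D, hD₀D, hDsph, hDconv, hDmax⟩ := hZorn
  -- maximality of the face M_y in the unit sphere of B
  have hMymax : ∀ C : Set C(Y,F), (∀ g ∈ C, g ∈ B ∧ ‖g‖ = 1) → Convex ℝ C →
      ({g : C(Y,F) | g ∈ B ∧ ‖g‖ = 1 ∧ g y = v} ⊆ C) → ∀ g₀ ∈ C, g₀ y = v := by
    intro C hC hCconv hMyC g₀ hg₀C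
    -- every element of C has norm one at y
    have hnorm1 : ∀ g ∈ C, ‖g y‖ = 1 := by
      intro g hgC
      have hKcl : IsClosed {z : Y | ‖g z‖ = 1} := isClosed_eq g.continuous.norm continuous_const
      have hycl : y ∈ closure {z : Y | ‖g z‖ = 1} := by
        rw [mem_closure_iff_nhds]
        intro U hU
        obtain ⟨h, hhB, hh1, hhy, hhsm⟩ := hΘB' y U hU (1/2) (by norm_num) v hv1
        have hhC : h ∈ C := hMyC ⟨hhB, hh1, hhy⟩
        have hmC : (1/2 : ℝ) • h + (1/2 : ℝ) • g ∈ C :=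
          hCconv hhC hgC (by norm_num) (by norm_num) (by norm_num)
        obtain ⟨z, hz⟩ := normAttain ((1/2 : ℝ) • h + (1/2 : ℝ) • g)
        rw [(hC _ hmC).2] at hz
        have hzeval : ‖(1/2 : ℝ) • h z + (1/2 : ℝ) • g z‖ = 1 := by simpa using hz
        have hg1 : ‖g z‖ ≤ 1 := by rw [← (hC g hgC).2]; exact ContinuousMap.norm_coe_le_norm _ _
        have hbig : (1:ℝ) ≤ 1/2 * ‖h z‖ + 1/2 * ‖g z‖ := by
          calc (1:ℝ) = ‖(1/2 : ℝ) • h z + (1/2 : ℝ) • g z‖ := hzeval.symm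
            _ ≤ ‖(1/2 : ℝ) • h z‖ + ‖(1/2 : ℝ) • g z‖ := norm_add_le _ _
            _ = 1/2 * ‖h z‖ + 1/2 * ‖g z‖ := by rw [norm_smul, norm_smul]; norm_num
        have hzU : z ∈ U := by
          by_contra hzU
          have := hhsm z hzU
          have hh1' : ‖h z‖ ≤ 1 := by rw [← hh1]; exact ContinuousMap.norm_coe_le_norm _ _
          linarith
        have hgz1 : ‖g z‖ = 1 := by
          have hh1' : ‖h z‖ ≤ 1 := by rw [← hh1]; exact ContinuousMap.norm_coe_le_norm _ _
          linarith
        exact ⟨z, hzU, hgz1⟩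
      rwa [hKcl.closure_eq] at hycl
    -- the set of values at y is a convex subset of the sphere containing v
    have himg : (fun g : C(Y,F) => g y) '' C = {v} := by
      apply hv.2.2
      · rintro e ⟨g, hg, rfl⟩
        rw [mem_sphere_zero_iff_norm]
        exact hnorm1 g hg
      · rintro e₁ ⟨g₁, hg₁, rfl⟩ e₂ ⟨g₂, hg₂, rfl⟩ a b ha hb hab
        exact ⟨a • g₁ + b • g₂, hCconv hg₁ hg₂ ha hb hab, by simp⟩
      · rw [singleton_subset_iff]
        obtain ⟨h, hhB, hh1, hhy, -⟩ := hΘB' y univ univ_mem 1 one_pos v hv1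
        exact ⟨h, hMyC ⟨hhB, hh1, hhy⟩, hhy⟩
    have : g₀ y ∈ ({v} : Set F) := himg ▸ mem_image_of_mem _ hg₀C
    exact this
  -- the face equality: every unit function of A with x₀-value in D lies in N
  have hface : ∀ f : C(X,E), f ∈ A → ‖f‖ = 1 → f x₀ ∈ D → f ∈ N := by
    intro f hfA hf1 hfD
    set Cf : Set C(X,E) := {f | f ∈ A ∧ ‖f‖ = 1 ∧ f x₀ ∈ D} with hCf
    have hCfconv : ∀ f₁ ∈ Cf, ∀ f₂ ∈ Cf, ∀ a b : ℝ, 0 ≤ a → 0 ≤ b → a + b = 1 →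
        a • f₁ + b • f₂ ∈ Cf := by
      rintro f₁ ⟨hf₁A, hf₁1, hf₁D⟩ f₂ ⟨hf₂A, hf₂1, hf₂D⟩ a b ha hb hab
      have hmem : a • f₁ + b • f₂ ∈ A := A.add_mem (rsmul_mem A hf₁A a) (rsmul_mem A hf₂A b)
      have hvalD : (a • f₁ + b • f₂) x₀ ∈ D := by
        have : (a • f₁ + b • f₂) x₀ = a • f₁ x₀ + b • f₂ x₀ := by simp
        rw [this]
        exact hDconv hf₁D hf₂D ha hb hab
      refine ⟨hmem, le_antisymm ?_ ?_, hvalD⟩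
      · calc ‖a • f₁ + b • f₂‖ ≤ ‖a • f₁‖ + ‖b • f₂‖ := norm_add_le _ _
          _ = a * ‖f₁‖ + b * ‖f₂‖ := by
              rw [norm_smul, norm_smul, Real.norm_of_nonneg ha, Real.norm_of_nonneg hb]
          _ = 1 := by rw [hf₁1, hf₂1]; ring_nf; linarith
      · calc (1:ℝ) = ‖(a • f₁ + b • f₂) x₀‖ := by
              rw [← mem_sphere_zero_iff_norm.mp (hDsph hvalD)]
          _ ≤ ‖a • f₁ + b • f₂‖ := ContinuousMap.norm_coe_le_norm _ _
    -- image of Cf under S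
    have himgval : ∀ g ∈ S '' Cf, g ∈ B ∧ ‖g‖ = 1 := by
      rintro g ⟨f', hf', rfl⟩
      exact ⟨hSmem _ hf'.1, by rw [hSnorm _ hf'.1]; exact hf'.2.1⟩
    have himgconv : Convex ℝ (S '' Cf) := by
      rintro g₁ ⟨f₁, hf₁, rfl⟩ g₂ ⟨f₂, hf₂, rfl⟩ a b ha hb hab
      refine ⟨a • f₁ + b • f₂, hCfconv _ hf₁ _ hf₂ a b ha hb hab, ?_⟩
      rw [hSadd _ (rsmul_mem A hf₁.1 a) _ (rsmul_mem A hf₂.1 b),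
        hSsmul a f₁ hf₁.1, hSsmul b f₂ hf₂.1]
    have hMyimg : {g : C(Y,F) | g ∈ B ∧ ‖g‖ = 1 ∧ g y = v} ⊆ S '' Cf := by
      rintro g ⟨hgB, hg1, hgy⟩
      obtain ⟨f', hf'A, hf'S⟩ := hSsurj g hgB
      have hf'N : f' ∈ N := ⟨hf'A, by rw [← hSnorm _ hf'A, hf'S]; exact hg1,
        by rw [hf'S]; exact hgy⟩
      exact ⟨f', ⟨hf'A, hf'N.2.1, hD₀D (mem_image_of_mem _ hf'N)⟩, hf'S⟩
    have hfCf : f ∈ Cf := ⟨hfA, hf1, hfD⟩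
    have : S f y = v := hMymax (S '' Cf) himgval himgconv hMyimg _ (mem_image_of_mem _ hfCf)
    exact ⟨hfA, hf1, this⟩
  -- the peaking property at x₀
  have hpeak : ∀ U ∈ nhds x₀, ∀ ε : ℝ, 0 < ε →
      ∃ h ∈ A, ‖h‖ = 1 ∧ (∀ z, z ∉ U → ‖h z‖ < ε) ∧ S h y = v := by
    intro U hU ε hε
    have hu₀D : f₀ x₀ ∈ D := hD₀D (mem_image_of_mem _ hf₀N)
    have hu₀1 : ‖f₀ x₀‖ = 1 := hx₀ f₀ hf₀N
    obtain ⟨h, hhA, hh1, hhx, hhsm⟩ := hΘA' x₀ U hU ε hε (f₀ x₀) hu₀1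
    have hhN : h ∈ N := hface h hhA hh1 (by rw [hhx]; exact hu₀D)
    exact ⟨h, hhA, hh1, hhsm, hhN.2.2⟩
  -- bound: for g ∈ A with ‖g‖ ≤ 1 vanishing at x₀, ‖v + S g y‖ ≤ 1 + δ for all δ > 0
  have hbound : ∀ g : C(X,E), g ∈ A → ‖g‖ ≤ 1 → g x₀ = 0 →
      ∀ δ : ℝ, 0 < δ → ‖v + S g y‖ ≤ 1 + δ := by
    intro g hgA hg1 hgx δ hδ
    set U : Set X := {z | ‖g z‖ < δ} with hU
    have hUopen : IsOpen U := isOpen_lt g.continuous.norm continuous_const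
    have hx₀U : x₀ ∈ U := by
      show ‖g x₀‖ < δ
      rw [hgx, norm_zero]; exact hδ
    obtain ⟨h, hhA, hh1, hhsm, hhS⟩ := hpeak U (hUopen.mem_nhds hx₀U) δ hδ
    have hsum : ‖h + g‖ ≤ 1 + δ := by
      refine (ContinuousMap.norm_le _ (by linarith)).mpr fun z => ?_
      have : ‖h z + g z‖ ≤ ‖h z‖ + ‖g z‖ := norm_add_le _ _
      by_cases hz : z ∈ U
      · have h1 : ‖h z‖ ≤ 1 := by rw [← hh1]; exact ContinuousMap.norm_coe_le_norm _ _
        have h2 : ‖g z‖ ≤ δ := le_of_lt hz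
        calc ‖(h + g) z‖ = ‖h z + g z‖ := by simp
          _ ≤ 1 + δ := by linarith
      · have h1 : ‖h z‖ ≤ δ := le_of_lt (hhsm z hz)
        have h2 : ‖g z‖ ≤ 1 := le_trans (ContinuousMap.norm_coe_le_norm _ _) hg1
        calc ‖(h + g) z‖ = ‖h z + g z‖ := by simp
          _ ≤ 1 + δ := by linarith
    calc ‖v + S g y‖ = ‖S h y + S g y‖ := by rw [hhS]
      _ = ‖S (h + g) y‖ := by rw [hSadd _ hhA _ hgA]; simp
      _ ≤ ‖S (h + g)‖ := ContinuousMap.norm_coe_le_norm _ _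
      _ = ‖h + g‖ := hSnorm _ (A.add_mem hhA hgA)
      _ ≤ 1 + δ := hsum
  -- vanishing: f ∈ A with f x₀ = 0 has S f y = 0
  have hS0 : S 0 = 0 := by
    have := hSsmul 0 0 A.zero_mem
    rwa [zero_smul, zero_smul] at this
  have hSneg : ∀ g ∈ A, S (-g) = - S g := by
    intro g hgA
    have := hSsmul (-1) g hgA
    rwa [neg_one_smul, neg_one_smul] at this
  have hvan : ∀ f : C(X,E), f ∈ A → f x₀ = 0 → S f y = 0 := by
    have core : ∀ f : C(X,E), f ∈ A → ‖f‖ ≤ 1 → f x₀ = 0 → S f y = 0 := by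
      intro f hfA hf1 hfx
      set w : F := S f y with hw
      have hvw₁ : ‖v + w‖ ≤ 1 :=
        le_of_forall_pos_le_add fun δ hδ => hbound f hfA hf1 hfx δ hδ
      have hvw₂ : ‖v - w‖ ≤ 1 := by
        have := le_of_forall_pos_le_add fun δ hδ =>
          hbound (-f) (A.neg_mem hfA) (by rwa [norm_neg]) (by simp [hfx]) δ hδ
        rwa [hSneg f hfA, ContinuousMap.neg_apply, ← sub_eq_add_neg] at this
      have h2v : ‖(v + w) + (v - w)‖ = 2 := by
        have : (v + w) + (v - w) = (2:ℝ) • v := by module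
        rw [this, norm_smul, hv1]; norm_num
      have heq₁ : ‖v + w‖ = 1 ∧ ‖v - w‖ = 1 := by
        have := norm_add_le (v + w) (v - w)
        rw [h2v] at this
        constructor <;> linarith
      -- the segment from v+w to v-w is a convex subset of the sphere containing v
      have hseg : segment ℝ (v + w) (v - w) = {v} := by
        apply hv.2.2
        · rintro p ⟨a, b, ha, hb, hab, rfl⟩
          rw [mem_sphere_zero_iff_norm]
          have hle : ∀ a' b' : ℝ, 0 ≤ a' → 0 ≤ b' → a' + b' = 1 →
              ‖a' • (v + w) + b' • (v - w)‖ ≤ 1 := by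
            intro a' b' ha' hb' hab'
            calc ‖a' • (v + w) + b' • (v - w)‖ ≤ ‖a' • (v + w)‖ + ‖b' • (v - w)‖ :=
                  norm_add_le _ _
              _ = a' * ‖v + w‖ + b' * ‖v - w‖ := by
                  rw [norm_smul, norm_smul, Real.norm_of_nonneg ha', Real.norm_of_nonneg hb']
              _ ≤ a' * 1 + b' * 1 := by
                  have := heq₁.1; have := heq₁.2
                  nlinarith
              _ = 1 := by linarith
          have hsum2 : (a • (v + w) + b • (v - w)) + (b • (v + w) + a • (v - w)) =
              (v + w) + (v - w) := by
            have h1 : a + b = 1 := hab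
            match_scalars <;> linarith
          have hq : ‖b • (v + w) + a • (v - w)‖ ≤ 1 := hle b a hb ha (by linarith)
          have h2 : (2:ℝ) ≤ ‖a • (v + w) + b • (v - w)‖ + ‖b • (v + w) + a • (v - w)‖ := by
            calc (2:ℝ) = ‖(v + w) + (v - w)‖ := h2v.symm
              _ = ‖(a • (v + w) + b • (v - w)) + (b • (v + w) + a • (v - w))‖ := by rw [hsum2]
              _ ≤ _ := norm_add_le _ _
          have := hle a b ha hb hab
          linarith
        · exact convex_segment _ _
        · rw [singleton_subset_iff]
          refine ⟨1/2, 1/2, by norm_num, by norm_num, by norm_num, ?_⟩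
          module
      have : v + w ∈ ({v} : Set F) := hseg ▸ left_mem_segment ℝ (v + w) (v - w)
      exact add_eq_left.mp (mem_singleton_iff.mp this)
    intro f hfA hfx
    by_cases hf0 : f = 0
    · rw [hf0, hS0]; simp
    · have hnz : ‖f‖ ≠ 0 := fun h => hf0 (norm_eq_zero.mp h)
      have hpos : 0 < ‖f‖ := lt_of_le_of_ne (norm_nonneg f) (Ne.symm hnz)
      set f' : C(X,E) := ‖f‖⁻¹ • f with hf'
      have hf'A : f' ∈ A := rsmul_mem A hfA _
      have hf'1 : ‖f'‖ ≤ 1 := by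
        rw [hf', norm_smul, norm_inv, Real.norm_of_nonneg (norm_nonneg f),
          inv_mul_cancel₀ hnz]
      have hf'x : f' x₀ = 0 := by
        show ‖f‖⁻¹ • f x₀ = 0
        rw [hfx, smul_zero]
      have hS' : S f' y = 0 := core f' hf'A hf'1 hf'x
      have : S f = ‖f‖ • S f' := by
        rw [← hSsmul _ _ hf'A, hf', smul_smul, mul_inv_cancel₀ hnz, one_smul]
      rw [this]
      show ‖f‖ • S f' y = 0
      rw [hS', smul_zero]
  -- the norm bound
  refine ⟨x₀, ?_, hpeak⟩
  intro f hfA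
  by_cases he : f x₀ = 0
  · rw [hvan f hfA he, norm_zero]; exact norm_nonneg _
  · have hen : ‖f x₀‖ ≠ 0 := fun h => he (norm_eq_zero.mp h)
    have hepos : 0 < ‖f x₀‖ := lt_of_le_of_ne (norm_nonneg _) (Ne.symm hen)
    have hu1 : ‖(‖f x₀‖⁻¹ • f x₀ : E)‖ = 1 := by
      rw [norm_smul, norm_inv, Real.norm_of_nonneg (norm_nonneg _), inv_mul_cancel₀ hen]
    obtain ⟨f', hf'A, hf'1, hf'x, -⟩ := hΘA' x₀ univ univ_mem 1 one_pos _ hu1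
    set f'' : C(X,E) := ‖f x₀‖ • f' with hf''
    have hf''A : f'' ∈ A := rsmul_mem A hf'A _
    have hf''x : f'' x₀ = f x₀ := by
      show ‖f x₀‖ • f' x₀ = f x₀
      rw [hf'x, smul_smul, mul_inv_cancel₀ hen, one_smul]
    have hf''n : ‖f''‖ = ‖f x₀‖ := by
      rw [hf'', norm_smul, Real.norm_of_nonneg (norm_nonneg _), hf'1, mul_one]
    have hdiff : (f - f'') x₀ = 0 := by
      show f x₀ - f'' x₀ = 0
      rw [hf''x, sub_self]
    have hdiffS : S (f - f'') y = 0 := hvan _ (A.sub_mem hfA hf''A) hdiff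
    have hSsub : S (f - f'') = S f - S f'' := by
      have : f - f'' = f + (-f'') := by abel
      rw [this, hSadd _ hfA _ (A.neg_mem hf''A), hSneg _ hf''A, ← sub_eq_add_neg]
    have hSfy : S f y = S f'' y := by
      have h1 := hdiffS
      rw [hSsub] at h1
      have h2 : S f y - S f'' y = 0 := by
        calc S f y - S f'' y = (S f - S f'') y := by simp
          _ = 0 := h1
      exact sub_eq_zero.mp h2
    calc ‖S f y‖ = ‖S f'' y‖ := by rw [hSfy]
      _ ≤ ‖S f''‖ := ContinuousMap.norm_coe_le_norm _ _
      _ = ‖f''‖ := hSnorm _ hf''A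
      _ = ‖f x₀‖ := hf''n

set_option maxHeartbeats 1000000 in
theorem mazurUlamStep (A : Subspace 𝕂 C(X, E)) (B : Subspace 𝕂 C(Y, F))
    (T : C(X, E) → C(Y, F))
    (hmap : ∀ f ∈ A, T f ∈ B)
    (hsurj : ∀ g ∈ B, ∃ f ∈ A, T f = g)
    (hiso : ∀ f ∈ A, ∀ g ∈ A, ‖T f - T g‖ = ‖f - g‖) :
    (∀ f ∈ A, ∀ g ∈ A, T (f + g) - T 0 = (T f - T 0) + (T g - T 0)) ∧
    (∀ (r : ℝ), ∀ f ∈ A, T (r • f) - T 0 = r • (T f - T 0)) := by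
  classical
  let A' : Submodule ℝ C(X,E) := A.restrictScalars ℝ
  let B' : Submodule ℝ C(Y,F) := B.restrictScalars ℝ
  have h0A : (0 : C(X,E)) ∈ A := A.zero_mem
  have hT0 : T 0 ∈ B := hmap 0 h0A
  have hmem : ∀ f : A', T (f : C(X,E)) - T 0 ∈ B' := fun f =>
    sub_mem (hmap _ f.2) hT0
  let e : A' → B' := fun f => ⟨T (f : C(X,E)) - T 0, hmem f⟩
  have hinj : Function.Injective e := by
    intro f g hfg
    have h1 : T (f : C(X,E)) = T (g : C(X,E)) := by
      have := congrArg (Subtype.val) hfg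
      simpa [e, sub_left_inj] using this
    have : ‖(f : C(X,E)) - g‖ = 0 := by
      rw [← hiso _ f.2 _ g.2, h1, sub_self, norm_zero]
    have := norm_eq_zero.mp this
    exact Subtype.ext (by rwa [sub_eq_zero] at this)
  have hsur : Function.Surjective e := by
    intro b
    obtain ⟨f, hfA, hf⟩ := hsurj (b + T 0) (add_mem b.2 hT0)
    exact ⟨⟨f, hfA⟩, Subtype.ext (by simp [e, hf])⟩
  have hisom : Isometry e := by
    apply Isometry.of_dist_eq
    intro f g
    have : dist (e f : C(Y,F)) (e g : C(Y,F)) = dist (f : C(X,E)) (g : C(X,E)) := by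
      simp only [dist_eq_norm, e]
      rw [show (T f - T 0) - (T g - T 0) = T f - T g by abel]
      exact hiso _ f.2 _ g.2
    rwa [Subtype.dist_eq, Subtype.dist_eq]
  let E' : A' ≃ᵢ B' := ⟨Equiv.ofBijective e ⟨hinj, hsur⟩, hisom⟩
  have h00 : E' 0 = 0 := by
    apply Subtype.ext
    simp [E', e, Equiv.ofBijective]
  let L := E'.toRealLinearIsometryEquivOfMapZero h00
  have hL : ∀ f : A', (L f : C(Y,F)) = T (f : C(X,E)) - T 0 := by
    intro f
    rw [IsometryEquiv.coe_toRealLinearIsometryEquivOfMapZero]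
    rfl
  constructor
  · intro f hf g hg
    have := hL (⟨f, hf⟩ + ⟨g, hg⟩)
    rw [map_add, Submodule.coe_add, hL, hL] at this
    simpa using this.symm
  · intro r f hf
    have := hL (r • (⟨f, hf⟩ : A'))
    rw [map_smul, Submodule.coe_smul, hL] at this
    simpa using this.symm

-- assume mainStep + mazurUlamStep conclusions as hypotheses, to develop assembly
theorem assembly (v : F)
    (A : Subspace 𝕂 C(X, E))
    (hΘA' : ∀ x : X, ∀ U ∈ nhds x, ∀ ε : ℝ, 0 < ε → ∀ u : E, ‖u‖ = 1 →
      ∃ f ∈ A, ‖f‖ = 1 ∧ f x = u ∧ ∀ z, z ∉ U → ‖f z‖ < ε)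
    (hv1 : ‖v‖ = 1)
    (T : C(X, E) → C(Y, F))
    (S : C(X, E) → C(Y, F)) (hS : S = fun f => T f - T 0)
    (hSnorm : ∀ f ∈ A, ‖S f‖ = ‖f‖)
    (hSadd : ∀ f ∈ A, ∀ g ∈ A, S (f + g) = S f + S g)
    (hSsmul : ∀ (r : ℝ), ∀ f ∈ A, S (r • f) = r • S f)
    (main : ∀ y : Y, ∃ x : X, (∀ f ∈ A, ‖S f y‖ ≤ ‖f x‖) ∧
      (∀ U ∈ nhds x, ∀ ε : ℝ, 0 < ε →
        ∃ h ∈ A, ‖h‖ = 1 ∧ (∀ z, z ∉ U → ‖h z‖ < ε) ∧ S h y = v)) :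
    ∃ (Φ : Y → X) (V : Y → (E →L[ℝ] F)),
      Continuous Φ ∧
      (∀ y : Y, ‖V y‖ ≤ 1) ∧
      (∀ f ∈ A, ∀ y : Y, T f y = T 0 y + V y (f (Φ y))) := by
  classical
  set Φ : Y → X := fun y => (main y).choose with hΦ
  have hΦQ : ∀ y : Y, ∀ f ∈ A, ‖S f y‖ ≤ ‖f (Φ y)‖ := fun y => (main y).choose_spec.1
  have hΦpeak : ∀ y : Y, ∀ U ∈ nhds (Φ y), ∀ ε : ℝ, 0 < ε →
      ∃ h ∈ A, ‖h‖ = 1 ∧ (∀ z, z ∉ U → ‖h z‖ < ε) ∧ S h y = v :=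
    fun y => (main y).choose_spec.2
  -- uniqueness
  have huniq : ∀ y : Y, ∀ x' : X, (∀ f ∈ A, ‖S f y‖ ≤ ‖f x'‖) → x' = Φ y := by
    intro y x' hx'
    by_contra hne
    have hU : ({x'}ᶜ : Set X) ∈ nhds (Φ y) :=
      (isOpen_compl_singleton).mem_nhds (by simpa using (Ne.symm hne))
    obtain ⟨h, hhA, hh1, hhsm, hhS⟩ := hΦpeak y _ hU (1/2) (by norm_num)
    have h1 : ‖h x'‖ < 1/2 := hhsm x' (by simp)
    have h2 : ‖S h y‖ ≤ ‖h x'‖ := hx' h hhA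
    rw [hhS, hv1] at h2
    linarith
  -- continuity of Φ
  have hG : IsClosed {p : Y × X | ∀ f ∈ A, ‖S f p.1‖ ≤ ‖f p.2‖} := by
    have : {p : Y × X | ∀ f ∈ A, ‖S f p.1‖ ≤ ‖f p.2‖} =
        ⋂ (f : C(X,E)) (_ : f ∈ A), {p : Y × X | ‖S f p.1‖ ≤ ‖f p.2‖} := by
      ext p; simp [mem_iInter]
    rw [this]
    refine isClosed_iInter fun f => isClosed_iInter fun hf => ?_
    exact isClosed_le (((S f).continuous.comp continuous_fst).norm)
      ((f.continuous.comp continuous_snd).norm)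
  have hΦcont : Continuous Φ := by
    rw [continuous_iff_isClosed]
    intro C hC
    have hkey : Φ ⁻¹' C =
        Prod.fst '' ({p : Y × X | ∀ f ∈ A, ‖S f p.1‖ ≤ ‖f p.2‖} ∩ (univ ×ˢ C)) := by
      ext y
      constructor
      · intro hy
        exact ⟨(y, Φ y), ⟨hΦQ y, by simpa using hy⟩, rfl⟩
      · rintro ⟨p, ⟨hpG, hpC⟩, rfl⟩
        have : p.2 = Φ p.1 := huniq p.1 p.2 hpG
        have hc : p.2 ∈ C := by simpa using hpC
        rwa [this] at hc
    rw [hkey]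
    have hcl : IsClosed ({p : Y × X | ∀ f ∈ A, ‖S f p.1‖ ≤ ‖f p.2‖} ∩ (univ ×ˢ C)) :=
      hG.inter (isClosed_univ.prod hC)
    exact (hcl.isCompact.image continuous_fst).isClosed
  -- construction of V
  have hEx : ∀ (x : X) (e : E), ∃ f : C(X,E), f ∈ A ∧ f x = e ∧ ‖f‖ = ‖e‖ := by
    intro x e
    by_cases he : e = 0
    · exact ⟨0, A.zero_mem, by simp [he], by simp [he]⟩
    · have hen : ‖e‖ ≠ 0 := fun h => he (norm_eq_zero.mp h)
      have hu1 : ‖(‖e‖⁻¹ • e : E)‖ = 1 := by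
        rw [norm_smul, norm_inv, Real.norm_of_nonneg (norm_nonneg _), inv_mul_cancel₀ hen]
      obtain ⟨f', hf'A, hf'1, hf'x, -⟩ := hΘA' x univ univ_mem 1 one_pos _ hu1
      refine ⟨‖e‖ • f', rsmul_mem A hf'A _, ?_, ?_⟩
      · show ‖e‖ • f' x = e
        rw [hf'x, smul_smul, mul_inv_cancel₀ hen, one_smul]
      · rw [norm_smul, Real.norm_of_nonneg (norm_nonneg _), hf'1, mul_one]
  have hkeyval : ∀ y : Y, ∀ f ∈ A, ∀ g ∈ A, f (Φ y) = g (Φ y) → S f y = S g y := by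
    intro y f hfA g hgA hfg
    have hsub : (f - g) (Φ y) = 0 := by
      show f (Φ y) - g (Φ y) = 0
      rw [hfg, sub_self]
    have := hΦQ y (f - g) (A.sub_mem hfA hgA)
    rw [hsub, norm_zero] at this
    have h0 : S (f - g) y = 0 := norm_le_zero_iff.mp this
    have hSsub : S (f - g) = S f - S g := by
      have h1 : f - g = f + (-1 : ℝ) • g := by
        rw [neg_one_smul]; abel
      rw [h1, hSadd _ hfA _ (rsmul_mem A hgA _), hSsmul, neg_one_smul, ← sub_eq_add_neg]
      exact hgA
    rw [hSsub] at h0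
    have : S f y - S g y = 0 := by
      calc S f y - S g y = (S f - S g) y := by simp
        _ = 0 := h0
    exact sub_eq_zero.mp this
  have hVex : ∀ y : Y, ∃ Vy : E →L[ℝ] F, ‖Vy‖ ≤ 1 ∧ ∀ f ∈ A, S f y = Vy (f (Φ y)) := by
    intro y
    set sel : E → C(X,E) := fun e => (hEx (Φ y) e).choose with hsel
    have hselA : ∀ e, sel e ∈ A := fun e => (hEx (Φ y) e).choose_spec.1
    have hselx : ∀ e, sel e (Φ y) = e := fun e => (hEx (Φ y) e).choose_spec.2.1
    have hseln : ∀ e, ‖sel e‖ = ‖e‖ := fun e => (hEx (Φ y) e).choose_spec.2.2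
    set V₀ : E →ₗ[ℝ] F :=
      { toFun := fun e => S (sel e) y
        map_add' := by
          intro e e'
          show S (sel (e + e')) y = S (sel e) y + S (sel e') y
          have h1 : (sel e + sel e') (Φ y) = e + e' := by
            show sel e (Φ y) + sel e' (Φ y) = e + e'
            rw [hselx, hselx]
          have := hkeyval y (sel (e + e')) (hselA _) (sel e + sel e')
            (A.add_mem (hselA _) (hselA _)) (by rw [hselx, h1])
          rw [this, hSadd _ (hselA _) _ (hselA _)]
          simp
        map_smul' := by
          intro r e
          show S (sel (r • e)) y = (RingHom.id ℝ) r • S (sel e) y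
          have h1 : (r • sel e) (Φ y) = r • e := by
            show r • sel e (Φ y) = r • e
            rw [hselx]
          have := hkeyval y (sel (r • e)) (hselA _) (r • sel e)
            (rsmul_mem A (hselA _) r) (by rw [hselx, h1])
          rw [this, hSsmul r _ (hselA _)]
          simp } with hV₀
    have hbnd : ∀ e : E, ‖V₀ e‖ ≤ 1 * ‖e‖ := by
      intro e
      calc ‖V₀ e‖ = ‖S (sel e) y‖ := rfl
        _ ≤ ‖S (sel e)‖ := ContinuousMap.norm_coe_le_norm _ _
        _ = ‖sel e‖ := hSnorm _ (hselA e)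
        _ = 1 * ‖e‖ := by rw [hseln, one_mul]
    refine ⟨V₀.mkContinuous 1 hbnd, V₀.mkContinuous_norm_le zero_le_one hbnd, ?_⟩
    intro f hfA
    have : S f y = S (sel (f (Φ y))) y :=
      hkeyval y f hfA (sel (f (Φ y))) (hselA _) (by rw [hselx])
    rw [this]
    rfl
  choose V hV1 hV2 using hVex
  refine ⟨Φ, V, hΦcont, hV1, ?_⟩
  intro f hfA y
  have := hV2 y f hfA
  rw [hS] at this
  have h1 : T f y - T 0 y = V y (f (Φ y)) := by
    calc T f y - T 0 y = (T f - T 0) y := by simp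
      _ = V y (f (Φ y)) := this
  rw [← h1]; abel


/-- If `{v}` is a singleton maximal convex subset of `S(F)`, `A` is closed with
`Θ(A) = X` and `Θ(B) = Y`, then any surjective isometry `T : A → B` is
represented by a continuous map `Φ : Y → X` and real-linear operators
`V_y : E → F` with `‖V_y‖ ≤ 1`. -/
theorem stmt18 (v : F) (hv : MaxConvexIn (sphere (0 : F) 1) {v})
    (A : Subspace 𝕂 C(X, E)) (hAcl : IsClosed (A : Set C(X, E)))
    (hΘA : strongBoundaryPoints (A : Set C(X, E)) = Set.univ)
    (B : Subspace 𝕂 C(Y, F))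
    (hΘB : strongBoundaryPoints (B : Set C(Y, F)) = Set.univ)
    (T : C(X, E) → C(Y, F))
    (hmap : ∀ f ∈ A, T f ∈ B)
    (hsurj : ∀ g ∈ B, ∃ f ∈ A, T f = g)
    (hiso : ∀ f ∈ A, ∀ g ∈ A, ‖T f - T g‖ = ‖f - g‖) :
    ∃ (Φ : Y → X) (V : Y → (E →L[ℝ] F)),
      Continuous Φ ∧
      (∀ y : Y, ‖V y‖ ≤ 1) ∧
      (∀ f ∈ A, ∀ y : Y, T f y = T 0 y + V y (f (Φ y))) := by
  classical
  obtain ⟨hSadd', hSsmul'⟩ := mazurUlamStep A B T hmap hsurj hiso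
  set S : C(X, E) → C(Y, F) := fun f => T f - T 0 with hS
  have hv1 : ‖v‖ = 1 := by
    have := hv.1 (mem_singleton v)
    rwa [mem_sphere_zero_iff_norm] at this
  have hΘA' : ∀ x : X, ∀ U ∈ nhds x, ∀ ε : ℝ, 0 < ε → ∀ u : E, ‖u‖ = 1 →
      ∃ f ∈ A, ‖f‖ = 1 ∧ f x = u ∧ ∀ z, z ∉ U → ‖f z‖ < ε :=
    fun x => Set.eq_univ_iff_forall.mp hΘA x
  have hSmem : ∀ f ∈ A, S f ∈ B := fun f hf => B.sub_mem (hmap f hf) (hmap 0 A.zero_mem)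
  have hSsurj : ∀ g ∈ B, ∃ f ∈ A, S f = g := by
    intro g hg
    obtain ⟨f, hfA, hf⟩ := hsurj (g + T 0) (B.add_mem hg (hmap 0 A.zero_mem))
    exact ⟨f, hfA, by rw [hS]; simp only [hf]; abel⟩
  have hSnorm : ∀ f ∈ A, ‖S f‖ = ‖f‖ := by
    intro f hf
    have := hiso f hf 0 A.zero_mem
    rwa [sub_zero] at this
  have hSadd : ∀ f ∈ A, ∀ g ∈ A, S (f + g) = S f + S g :=
    fun f hf g hg => hSadd' f hf g hg
  have hSsmul : ∀ (r : ℝ), ∀ f ∈ A, S (r • f) = r • S f :=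
    fun r f hf => hSsmul' r f hf
  have main : ∀ y : Y, ∃ x : X, (∀ f ∈ A, ‖S f y‖ ≤ ‖f x‖) ∧
      (∀ U ∈ nhds x, ∀ ε : ℝ, 0 < ε →
        ∃ h ∈ A, ‖h‖ = 1 ∧ (∀ z, z ∉ U → ‖h z‖ < ε) ∧ S h y = v) :=
    fun y => mainStep v hv A hΘA B hΘB S hSmem hSsurj hSnorm hSadd hSsmul y
  exact assembly v A hΘA' hv1 T S hS hSnorm hSadd hSsmul main
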